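/- Let A = [a_ij] be an n×n real symmetric positive semidefinite matrix, let D be the diagonal matrix whose diagonal entries are a_11,…,a_nn, and let D^{1/2} be its (entrywise) nonnegative square root. Then for every n×n real symmetric matrix X, the Hadamard product A ∘ X is majorized by D^{1/2} X D^{1/2}. -/

import Mathlib

open Finset

/-- If `0 ≤ c ≤ 1` with `∑ c = k`, then `∑ c i * lam i` is at most some `k`-subset sum of `lam`. -/
lemma aux_sum_le_topk {n : ℕ} (c lam : Fin n → ℝ) (k : ℕ) (hk : k ≤ n)
    (h0 : ∀ i, 0 ≤ c i) (h1 : ∀ i, c i ≤ 1) (hsum : ∑ i, c i = k) :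
    ∃ t : Finset (Fin n), t.card = k ∧ ∑ i, c i * lam i ≤ ∑ i ∈ t, lam i := by
  have hne : (univ.powersetCard k : Finset (Finset (Fin n))).Nonempty := by
    rw [Finset.powersetCard_nonempty]
    simpa using hk
  obtain ⟨t, htmem, htmax⟩ := Finset.exists_max_image _ (fun t => ∑ i ∈ t, lam i) hne
  rw [Finset.mem_powersetCard_univ] at htmem
  refine ⟨t, htmem, ?_⟩
  rcases Finset.eq_empty_or_nonempty t with rfl | htne
  · have hk0 : (k : ℝ) = 0 := by simpa using htmem.symm
    have : ∀ i ∈ univ, c i = 0 := by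
      rw [← Finset.sum_eq_zero_iff_of_nonneg (fun i _ => h0 i)]
      rw [hsum, hk0]
    simp only [Finset.sum_empty]
    rw [Finset.sum_eq_zero]
    intro i hi; rw [this i hi, zero_mul]
  · -- key: any element outside t has lam value ≤ any element inside t
    have hswap : ∀ i ∈ t, ∀ j ∉ t, lam j ≤ lam i := by
      intro i hi j hj
      have hk1 : 1 ≤ k := htmem ▸ Finset.card_pos.mpr ⟨i, hi⟩
      have hmem' : insert j (t.erase i) ∈ univ.powersetCard k := by
        rw [Finset.mem_powersetCard_univ, Finset.card_insert_of_notMem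
          (fun h => hj (Finset.mem_of_mem_erase h)), Finset.card_erase_of_mem hi, htmem]
        omega
      have := htmax _ hmem'
      rw [Finset.sum_insert (fun h => hj (Finset.mem_of_mem_erase h))] at this
      have he : ∑ x ∈ t.erase i, lam x = ∑ x ∈ t, lam x - lam i := by
        rw [← Finset.sum_erase_add t lam hi]; ring
      rw [he] at this; linarith
    set μ : ℝ := t.inf' htne lam with hμ
    obtain ⟨i0, hi0, hi0eq⟩ := Finset.exists_mem_eq_inf' htne lam
    have hμle : ∀ i ∈ t, μ ≤ lam i := fun i hi => Finset.inf'_le _ hi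
    have hleμ : ∀ j, j ∉ t → lam j ≤ μ := by
      intro j hj; rw [hμ, hi0eq]; exact hswap i0 hi0 j hj
    have h2 : ∑ i ∈ t, c i * lam i ≤ ∑ i ∈ t, (lam i - (1 - c i) * μ) := by
      refine Finset.sum_le_sum fun i hi => ?_
      nlinarith [h0 i, h1 i, hμle i hi]
    have h3 : ∑ i ∈ tᶜ, c i * lam i ≤ ∑ i ∈ tᶜ, c i * μ := by
      refine Finset.sum_le_sum fun j hj => ?_
      exact mul_le_mul_of_nonneg_left (hleμ j (by simpa using hj)) (h0 j)
    have hsplit : ∑ i, c i * lam i = ∑ i ∈ t, c i * lam i + ∑ i ∈ tᶜ, c i * lam i :=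
      (Finset.sum_add_sum_compl t _).symm
    have hcsplit : ∑ i ∈ t, c i + ∑ i ∈ tᶜ, c i = (k : ℝ) := by
      rw [Finset.sum_add_sum_compl t c, hsum]
    have e2 : ∑ i ∈ t, (lam i - (1 - c i) * μ) =
        ∑ i ∈ t, lam i - ((k : ℝ) - ∑ i ∈ t, c i) * μ := by
      rw [Finset.sum_sub_distrib]
      congr 1
      rw [← Finset.sum_mul]
      congr 1
      rw [Finset.sum_sub_distrib, Finset.sum_const, htmem]
      simp
    have e3 : ∑ i ∈ tᶜ, c i * μ = (∑ i ∈ tᶜ, c i) * μ := (Finset.sum_mul _ _ _).symm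
    rw [hsplit]
    rw [e2] at h2; rw [e3] at h3
    have hb : (k : ℝ) - ∑ i ∈ t, c i = ∑ i ∈ tᶜ, c i := by linarith
    rw [hb] at h2
    linarith

open Matrix

/-- Diagonal entries of a real PSD matrix are nonnegative. -/
lemma aux_diag_nonneg {n : ℕ} {M : Matrix (Fin n) (Fin n) ℝ} (hM : M.PosSemidef) (i : Fin n) :
    0 ≤ M i i := by
  simpa [dotProduct, mulVec, Pi.single_apply, Finset.sum_ite_eq] using hM.dotProduct_mulVec_nonneg (Pi.single i 1)

section
open scoped MatrixOrder Matrix.Norms.L2Operator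
lemma aux_exists_sqrt {n : ℕ} {A : Matrix (Fin n) (Fin n) ℝ} (hA : A.PosSemidef) :
    ∃ B : Matrix (Fin n) (Fin n) ℝ, A = star B * B :=
  CStarAlgebra.nonneg_iff_eq_star_mul_self.mp hA.nonneg
end

noncomputable def Matrix.PosSemidef.sqrt {n : ℕ} {A : Matrix (Fin n) (Fin n) ℝ}
    (hA : A.PosSemidef) : Matrix (Fin n) (Fin n) ℝ :=
  Classical.choose (aux_exists_sqrt hA)

/-- Representation of a real PSD matrix via its square root. -/
lemma aux_psd_repr {n : ℕ} {A : Matrix (Fin n) (Fin n) ℝ} (hA : A.PosSemidef) (i j : Fin n) :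
    A i j = ∑ m, hA.sqrt m i * hA.sqrt m j := by
  have h := Classical.choose_spec (aux_exists_sqrt hA)
  conv_lhs => rw [h]
  rw [Matrix.mul_apply]
  rfl

/-- If a diagonal entry of a real PSD matrix vanishes, so does its whole row. -/
lemma aux_diag_zero {n : ℕ} {A : Matrix (Fin n) (Fin n) ℝ} (hA : A.PosSemidef) (i : Fin n)
    (h : A i i = 0) (j : Fin n) : A i j = 0 := by
  have hz : ∀ m, hA.sqrt m i = 0 := by
    have h0 : ∑ m, hA.sqrt m i * hA.sqrt m i = 0 := by rw [← aux_psd_repr hA]; exact h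
    intro m
    have := (Finset.sum_eq_zero_iff_of_nonneg (fun m _ => mul_self_nonneg (hA.sqrt m i))).mp h0
      m (Finset.mem_univ m)
    exact mul_self_eq_zero.mp this
  rw [aux_psd_repr hA]
  exact Finset.sum_eq_zero fun m _ => by rw [hz m, zero_mul]

/-- Schur product theorem: the Hadamard product of real PSD matrices is PSD. -/
lemma aux_schur_psd {n : ℕ} {A P : Matrix (Fin n) (Fin n) ℝ} (hA : A.PosSemidef)
    (hP : P.PosSemidef) : (A ⊙ P).PosSemidef := by
  refine Matrix.PosSemidef.of_dotProduct_mulVec_nonneg ?_ ?_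
  · ext i j
    have hA' := congrFun (congrFun hA.isHermitian i) j
    have hP' := congrFun (congrFun hP.isHermitian i) j
    simp only [Matrix.conjTranspose_apply, Matrix.hadamard_apply, star_trivial] at *
    rw [hA', hP']
  · intro x
    have key : dotProduct (star x) ((A ⊙ P) *ᵥ x) =
        ∑ m, dotProduct (star fun i => hA.sqrt m i * x i) (P *ᵥ fun i => hA.sqrt m i * x i) := by
      simp only [dotProduct, mulVec, star_trivial, Matrix.hadamard_apply, Finset.mul_sum]
      have step : ∀ i j, x i * (A i j * P i j * x j) =
          ∑ m, (hA.sqrt m i * x i) * (P i j * (hA.sqrt m j * x j)) := by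
        intro i j
        have : x i * (A i j * P i j * x j) =
            (∑ m, hA.sqrt m i * hA.sqrt m j) * (x i * (P i j * x j)) := by
          rw [← aux_psd_repr hA i j]; ring
        rw [this, Finset.sum_mul]
        exact Finset.sum_congr rfl fun m _ => by ring
      refine Eq.trans (Finset.sum_congr rfl fun i _ => Finset.sum_congr rfl fun j _ => step i j) ?_
      refine Eq.trans (Finset.sum_congr rfl fun i _ => Finset.sum_comm) ?_
      exact Finset.sum_comm
    rw [key]
    exact Finset.sum_nonneg fun m _ => hP.dotProduct_mulVec_nonneg _

open Matrix

/-- Trace of a real symmetric matrix is the sum of its eigenvalues. -/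
lemma aux_trace_eq_sum_eigenvalues {n : ℕ} {M : Matrix (Fin n) (Fin n) ℝ}
    (hM : M.IsHermitian) : M.trace = ∑ i, hM.eigenvalues i := by
  conv_lhs => rw [hM.spectral_theorem, Unitary.conjStarAlgAut_apply]
  rw [Matrix.trace_mul_cycle,
    Matrix.mem_unitaryGroup_iff'.mp hM.eigenvectorUnitary.2, Matrix.one_mul,
    Matrix.trace_diagonal]
  simp [RCLike.ofReal_real_eq_id]

/-- Ky Fan type bound: if `0 ⪯ R ⪯ 1` and `trace R = k`, then
`trace (R * Y)` is at most some `k`-subset sum of eigenvalues of `Y`. -/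
lemma aux_kyfan {n : ℕ} {Y R : Matrix (Fin n) (Fin n) ℝ} (hY : Y.IsHermitian)
    (hR : R.PosSemidef) (hR1 : ((1 : Matrix (Fin n) (Fin n) ℝ) - R).PosSemidef)
    (k : ℕ) (hk : k ≤ n) (htr : R.trace = k) :
    ∃ t : Finset (Fin n), t.card = k ∧ (R * Y).trace ≤ ∑ i ∈ t, hY.eigenvalues i := by
  set V : Matrix (Fin n) (Fin n) ℝ := (hY.eigenvectorUnitary : Matrix (Fin n) (Fin n) ℝ) with hVdef
  have hV1 : star V * V = 1 := Matrix.mem_unitaryGroup_iff'.mp hY.eigenvectorUnitary.2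
  have hV2 : V * star V = 1 := Matrix.mem_unitaryGroup_iff.mp hY.eigenvectorUnitary.2
  set c : Fin n → ℝ := fun j => (star V * R * V) j j with hc
  have hpsd1 : (star V * R * V).PosSemidef := by
    have := hR.conjTranspose_mul_mul_same V
    simpa [Matrix.star_eq_conjTranspose] using this
  have hpsd2 : (star V * ((1 : Matrix (Fin n) (Fin n) ℝ) - R) * V).PosSemidef := by
    have := hR1.conjTranspose_mul_mul_same V
    simpa [Matrix.star_eq_conjTranspose] using this
  have hc0 : ∀ j, 0 ≤ c j := fun j => aux_diag_nonneg hpsd1 j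
  have hc1 : ∀ j, c j ≤ 1 := by
    intro j
    have h := aux_diag_nonneg hpsd2 j
    have : star V * ((1 : Matrix (Fin n) (Fin n) ℝ) - R) * V = 1 - star V * R * V := by
      rw [Matrix.mul_sub, Matrix.sub_mul, Matrix.mul_one, hV1]
    rw [this] at h
    simp only [Matrix.sub_apply, Matrix.one_apply_eq] at h
    linarith
  have hcsum : ∑ j, c j = (k : ℝ) := by
    have : ∑ j, c j = (star V * R * V).trace := rfl
    rw [this, Matrix.trace_mul_cycle, hV2, Matrix.one_mul, htr]
  have hRY : (R * Y).trace = ∑ j, c j * hY.eigenvalues j := by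
    conv_lhs => rw [hY.spectral_theorem, Unitary.conjStarAlgAut_apply]
    have : R * (V * diagonal (RCLike.ofReal ∘ hY.eigenvalues) * star V) =
        (R * V) * diagonal (RCLike.ofReal ∘ hY.eigenvalues) * star V := by
      noncomm_ring
    rw [this, Matrix.trace_mul_cycle, ← Matrix.mul_assoc]
    rw [Matrix.trace]
    refine Finset.sum_congr rfl fun j _ => ?_
    rw [Matrix.diag_apply, Matrix.mul_diagonal]
    simp only [RCLike.ofReal_real_eq_id, Function.comp, id]
    rfl
  obtain ⟨t, ht, hle⟩ := aux_sum_le_topk c hY.eigenvalues k hk hc0 hc1 hcsum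
  exact ⟨t, ht, hRY ▸ hle⟩
open Matrix

/-- `v` is majorized by `w`: for every `k`, the sum of the `k` largest entries of `v`
is at most the sum of the `k` largest entries of `w`, with equality for `k = n`.
Stated equivalently: every subset sum of `v` is dominated by some subset sum of `w`
of the same cardinality, and the total sums agree. -/
def VecMajorizedBy {ι : Type*} [Fintype ι] (v w : ι → ℝ) : Prop :=
  (∀ s : Finset ι, ∃ t : Finset ι, t.card = s.card ∧ ∑ i ∈ s, v i ≤ ∑ i ∈ t, w i) ∧
    ∑ i, v i = ∑ i, w i

/-- `X` is majorized by `Y`: both are (real) symmetric and the eigenvalue vector of `X`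
is majorized by the eigenvalue vector of `Y`. -/
def MatMajorizedBy {ι : Type*} [Fintype ι] [DecidableEq ι]
    (X Y : Matrix ι ι ℝ) : Prop :=
  ∃ (hX : X.IsHermitian) (hY : Y.IsHermitian),
    VecMajorizedBy hX.eigenvalues hY.eigenvalues


lemma aux_trace_conj {n : ℕ} (V M : Matrix (Fin n) (Fin n) ℝ) (hV1 : star V * V = 1) :
    (V * M * star V).trace = M.trace := by
  rw [Matrix.trace_mul_cycle, hV1, Matrix.one_mul]

/-- For a real symmetric positive semidefinite `A` and `D^{1/2}` the diagonal matrix with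
entries `√(a i i)`, the Hadamard product `A ⊙ X` is majorized by `D^{1/2} * X * D^{1/2}`
for every symmetric `X`. -/
theorem hadamard_majorized_diagSqrt_conj {n : ℕ}
    (A X : Matrix (Fin n) (Fin n) ℝ) (hA : A.PosSemidef) (hX : X.IsHermitian) :
    MatMajorizedBy (A ⊙ X)
      (Matrix.diagonal (fun i => Real.sqrt (A i i)) * X *
        Matrix.diagonal (fun i => Real.sqrt (A i i))) := by
  have hXsym : ∀ i j, X i j = X j i := by
    intro i j
    have := congrFun (congrFun hX j) i
    simpa [Matrix.conjTranspose_apply] using this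
  have hAsym : ∀ i j, A i j = A j i := by
    intro i j
    have := congrFun (congrFun hA.isHermitian j) i
    simpa [Matrix.conjTranspose_apply] using this
  set d : Matrix (Fin n) (Fin n) ℝ := diagonal (fun i => Real.sqrt (A i i)) with hd
  have hAX : (A ⊙ X).IsHermitian := by
    ext i j
    simp only [Matrix.conjTranspose_apply, Matrix.hadamard_apply, star_trivial]
    rw [hAsym j i, hXsym j i]
  have hdh : dᴴ = d := by simp [hd, Matrix.diagonal_conjTranspose]
  have hY : (d * X * d).IsHermitian := by
    show (d * X * d)ᴴ = d * X * d
    rw [Matrix.conjTranspose_mul, Matrix.conjTranspose_mul, hdh, hX.eq, ← Matrix.mul_assoc]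
  refine ⟨hAX, hY, ?_, ?_⟩
  · -- subset sums
    intro s
    have hkn : s.card ≤ n := by simpa using s.card_le_univ
    set V : Matrix (Fin n) (Fin n) ℝ := (hAX.eigenvectorUnitary : Matrix (Fin n) (Fin n) ℝ)
      with hVdef
    have hV1 : star V * V = 1 := Matrix.mem_unitaryGroup_iff'.mp hAX.eigenvectorUnitary.2
    have hV2 : V * star V = 1 := Matrix.mem_unitaryGroup_iff.mp hAX.eigenvectorUnitary.2
    set E : Matrix (Fin n) (Fin n) ℝ := diagonal (fun i => if i ∈ s then 1 else 0) with hEdef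
    have hE : E.PosSemidef := Matrix.PosSemidef.diagonal (fun i => by dsimp; split <;> norm_num)
    have hE1 : ((1 : Matrix (Fin n) (Fin n) ℝ) - E).PosSemidef := by
      have h : (1 : Matrix (Fin n) (Fin n) ℝ) - E
          = diagonal (fun i => 1 - if i ∈ s then 1 else 0) := by
        rw [hEdef, ← Matrix.diagonal_one, Matrix.diagonal_sub]
      rw [h]
      exact Matrix.PosSemidef.diagonal (fun i => by dsimp; split <;> norm_num)
    set P : Matrix (Fin n) (Fin n) ℝ := V * E * star V with hPdef
    have hP : P.PosSemidef := by
      have := hE.mul_mul_conjTranspose_same V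
      simpa [Matrix.star_eq_conjTranspose, hPdef] using this
    have h1P : ((1 : Matrix (Fin n) (Fin n) ℝ) - P).PosSemidef := by
      have h : V * ((1 : Matrix (Fin n) (Fin n) ℝ) - E) * star V
          = (1 : Matrix (Fin n) (Fin n) ℝ) - P := by
        rw [Matrix.mul_sub, Matrix.mul_one, Matrix.sub_mul, hV2, hPdef]
      rw [← h]
      have := hE1.mul_mul_conjTranspose_same V
      simpa [Matrix.star_eq_conjTranspose] using this
    have hPsym : ∀ i j, P i j = P j i := by
      intro i j
      have := congrFun (congrFun hP.isHermitian j) i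
      simpa [Matrix.conjTranspose_apply] using this
    -- Step A : subset eigenvalue sum = trace (P * (A ⊙ X))
    have hsA : ∑ i ∈ s, hAX.eigenvalues i = (P * (A ⊙ X)).trace := by
      conv_rhs => rw [hAX.spectral_theorem, Unitary.conjStarAlgAut_apply]
      have hcol : P * ((V : Matrix (Fin n) (Fin n) ℝ)
            * diagonal (RCLike.ofReal ∘ hAX.eigenvalues) * star V)
          = V * (E * diagonal (RCLike.ofReal ∘ hAX.eigenvalues)) * star V := by
        rw [hPdef]
        have h1 : (V * E * star V) * (V * diagonal (RCLike.ofReal ∘ hAX.eigenvalues) * star V)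
            = V * E * (star V * V) * diagonal (RCLike.ofReal ∘ hAX.eigenvalues) * star V := by
          noncomm_ring
        rw [h1, hV1, Matrix.mul_one, Matrix.mul_assoc V E _, ← Matrix.mul_assoc]
      rw [hcol, aux_trace_conj _ _ hV1, hEdef, Matrix.diagonal_mul_diagonal,
        Matrix.trace_diagonal]
      simp [ite_mul, Finset.sum_ite_mem]
    -- Step B : trace (P * (A ⊙ X)) = trace ((A ⊙ P) * X)
    have hPC : (P * (A ⊙ X)).trace = ((A ⊙ P) * X).trace := by
      rw [Matrix.trace, Matrix.trace]
      simp only [Matrix.diag_apply, Matrix.mul_apply, Matrix.hadamard_apply]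
      rw [Finset.sum_comm]
      refine Finset.sum_congr rfl fun i _ => Finset.sum_congr rfl fun j _ => ?_
      rw [hPsym j i, hXsym j i]
      ring
    -- Step C-E
    set sinv : Fin n → ℝ := fun i => if A i i = 0 then 0 else (Real.sqrt (A i i))⁻¹ with hsinv
    set ev : Fin n → ℝ := fun i => if A i i = 0 then 0 else 1 with hev
    set f : Fin n → ℝ := fun i => if A i i = 0 then P i i else 0 with hf
    have hsqrt_pos : ∀ i, A i i ≠ 0 → 0 < Real.sqrt (A i i) := fun i hi =>
      Real.sqrt_pos.mpr (lt_of_le_of_ne (aux_diag_nonneg hA i) (Ne.symm hi))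
    set S : Matrix (Fin n) (Fin n) ℝ := diagonal sinv with hS
    have hSh : Sᴴ = S := by simp [hS, Matrix.diagonal_conjTranspose]
    have hA' : (S * A * S).PosSemidef := by
      have := hA.conjTranspose_mul_mul_same S; rwa [hSh] at this
    have hA'app : ∀ i j, (S * A * S) i j = sinv i * A i j * sinv j := by
      intro i j; rw [hS, Matrix.mul_diagonal, Matrix.diagonal_mul]
    have hA'diag : ∀ i, (S * A * S) i i = ev i := by
      intro i
      rw [hA'app]
      by_cases h : A i i = 0
      · simp [hsinv, hev, h]
      · have hs := Real.mul_self_sqrt (aux_diag_nonneg hA i)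
        have hne := (hsqrt_pos i h).ne'
        simp only [hsinv, hev, if_neg h]
        field_simp
        rw [sq, hs]
    have hSCS : S * (A ⊙ P) * S = (S * A * S) ⊙ P := by
      ext i j
      rw [Matrix.hadamard_apply, hA'app, hS, Matrix.mul_diagonal, Matrix.diagonal_mul,
        Matrix.hadamard_apply]
      ring
    set R : Matrix (Fin n) (Fin n) ℝ := S * (A ⊙ P) * S + diagonal f with hR
    have hRpsd : R.PosSemidef := by
      refine Matrix.PosSemidef.add ?_ (Matrix.PosSemidef.diagonal ?_)
      · have := (aux_schur_psd hA hP).conjTranspose_mul_mul_same S; rwa [hSh] at this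
      · intro i
        simp only [hf]
        split
        · exact aux_diag_nonneg hP i
        · exact le_refl 0
    have hPdiag_le1 : ∀ i, P i i ≤ 1 := by
      intro i
      have h := aux_diag_nonneg h1P i
      simp only [Matrix.sub_apply, Matrix.one_apply_eq] at h
      linarith
    have hhad1 : (S * A * S) ⊙ ((1 : Matrix (Fin n) (Fin n) ℝ) - P)
        = diagonal ev - (S * A * S) ⊙ P := by
      ext i j
      rw [Matrix.hadamard_apply, Matrix.sub_apply, Matrix.sub_apply, Matrix.hadamard_apply,
        Matrix.diagonal_apply]
      by_cases h : i = j
      · subst h; rw [if_pos rfl, Matrix.one_apply_eq, hA'diag]; ring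
      · rw [if_neg h, Matrix.one_apply_ne h]; ring
    have h1R : ((1 : Matrix (Fin n) (Fin n) ℝ) - R).PosSemidef := by
      have hdiagid : diagonal (fun i => 1 - ev i - f i)
          = 1 - diagonal ev - diagonal f := by
        rw [← Matrix.diagonal_one, ← Matrix.diagonal_sub, ← Matrix.diagonal_sub]
      have hsplit : (1 : Matrix (Fin n) (Fin n) ℝ) - R
          = (S * A * S) ⊙ ((1 : Matrix (Fin n) (Fin n) ℝ) - P)
            + diagonal (fun i => 1 - ev i - f i) := by
        rw [hhad1, hdiagid, hR, hSCS]; abel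
      rw [hsplit]
      refine Matrix.PosSemidef.add (aux_schur_psd hA' h1P) (Matrix.PosSemidef.diagonal ?_)
      intro i
      by_cases h : A i i = 0
      · simp only [hev, hf, if_pos h, Pi.zero_apply]
        have := hPdiag_le1 i; linarith
      · simp only [hev, hf, if_neg h, Pi.zero_apply]; norm_num
    have htrP : P.trace = (s.card : ℝ) := by
      rw [hPdef, aux_trace_conj _ _ hV1, hEdef, Matrix.trace_diagonal]
      simp [Finset.sum_ite_mem]
    have htrR : R.trace = (s.card : ℝ) := by
      rw [hR, Matrix.trace_add, Matrix.trace_diagonal]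
      have h1 : (S * (A ⊙ P) * S).trace = ∑ i, ev i * P i i := by
        rw [Matrix.trace]
        refine Finset.sum_congr rfl fun i _ => ?_
        rw [Matrix.diag_apply, hS, Matrix.mul_diagonal, Matrix.diagonal_mul,
          Matrix.hadamard_apply]
        by_cases h : A i i = 0
        · simp [hsinv, hev, h]
        · simp only [hsinv, hev, if_neg h]
          have hs := Real.mul_self_sqrt (aux_diag_nonneg hA i)
          have hne := (hsqrt_pos i h).ne'
          field_simp
          linear_combination (-(P i i)) * hs
      rw [h1, ← Finset.sum_add_distrib, ← htrP, Matrix.trace]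
      refine Finset.sum_congr rfl fun i _ => ?_
      rw [Matrix.diag_apply]
      by_cases h : A i i = 0
      · simp [hev, hf, h]
      · simp [hev, hf, h]
    have hdSCSd : d * (S * (A ⊙ P) * S) * d = A ⊙ P := by
      ext i j
      rw [hd, Matrix.mul_diagonal, Matrix.diagonal_mul, hS, Matrix.mul_diagonal,
        Matrix.diagonal_mul, Matrix.hadamard_apply]
      by_cases hi : A i i = 0
      · have hz : A i j = 0 := aux_diag_zero hA i hi j
        simp [hsinv, hi, hz]
      · by_cases hj : A j j = 0
        · have hz : A i j = 0 := by rw [hAsym]; exact aux_diag_zero hA j hj i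
          simp [hsinv, hj, hz]
        · simp only [hsinv, if_neg hi, if_neg hj]
          have hnei := (hsqrt_pos i hi).ne'
          have hnej := (hsqrt_pos j hj).ne'
          field_simp
    have htrRY : (R * (d * X * d)).trace = ((A ⊙ P) * X).trace := by
      rw [hR, Matrix.add_mul, Matrix.trace_add]
      have hz : (diagonal f * (d * X * d)).trace = 0 := by
        rw [Matrix.trace]
        refine Finset.sum_eq_zero fun i _ => ?_
        rw [Matrix.diag_apply, Matrix.diagonal_mul]
        by_cases h : A i i = 0
        · have hzz : (d * X * d) i i = 0 := by
            rw [hd, Matrix.mul_diagonal, Matrix.diagonal_mul, h, Real.sqrt_zero]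
            ring
          rw [hzz, mul_zero]
        · simp [hf, h]
      have hmain : ((S * (A ⊙ P) * S) * (d * X * d)).trace = ((A ⊙ P) * X).trace := by
        have hassoc : (S * (A ⊙ P) * S) * (d * X * d)
            = ((S * (A ⊙ P) * S) * d) * X * d := by noncomm_ring
        rw [hassoc, Matrix.trace_mul_cycle]
        have hassoc2 : d * ((S * (A ⊙ P) * S) * d) * X
            = (d * (S * (A ⊙ P) * S) * d) * X := by noncomm_ring
        rw [hassoc2, hdSCSd]
      rw [hz, hmain, add_zero]
    obtain ⟨t, htcard, hbound⟩ := aux_kyfan hY hRpsd h1R s.card hkn htrR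
    refine ⟨t, htcard, ?_⟩
    calc ∑ i ∈ s, hAX.eigenvalues i = (P * (A ⊙ X)).trace := hsA
      _ = ((A ⊙ P) * X).trace := hPC
      _ = (R * (d * X * d)).trace := htrRY.symm
      _ ≤ ∑ i ∈ t, hY.eigenvalues i := hbound

  · -- total sums
    have e1 : (A ⊙ X).trace = ∑ i, A i i * X i i := by
      simp [Matrix.trace, Matrix.diag, Matrix.hadamard_apply]
    have e2 : (d * X * d).trace = ∑ i, A i i * X i i := by
      rw [Matrix.trace]
      refine Finset.sum_congr rfl fun i _ => ?_
      rw [Matrix.diag_apply, hd, Matrix.mul_diagonal, Matrix.diagonal_mul]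
      have h := Real.mul_self_sqrt (aux_diag_nonneg hA i)
      linear_combination X i i * h
    rw [← aux_trace_eq_sum_eigenvalues hAX, ← aux_trace_eq_sum_eigenvalues hY, e1, e2]
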